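/- Let g(n) = S_1(n) - S_3(n), where S_1(n) = sum_{k in Z} q^{3k^2 - k - 3kn} [n choose 3k-n]_q and S_3(n) = sum_{k in Z} q^{3k^2 - k - 3kn} [n choose 3k-1-n]_q. Then g satisfies the recurrence g(n) = -q^{-n} * g(n-1) for all n >= 1, and g(0) = 1. -/

import Mathlib

/-- Gaussian binomial coefficient `[n choose r]_q`, defined via the q-Pascal
recurrence, with the convention that it is `0` when `r < 0` or `r > n`. -/
def qbinom {K : Type*} [CommRing K] (q : K) : ℕ → ℤ → K
  | 0, r => if r = 0 then 1 else 0
  | n + 1, r => q ^ r.toNat * qbinom q n r + qbinom q n (r - 1)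

noncomputable def S1 {K : Type*} [Field K] (q : K) (n : ℕ) : K :=
  ∑ᶠ k : ℤ, q ^ (3 * k ^ 2 - k - 3 * k * n) * qbinom q n (3 * k - n)

noncomputable def S3 {K : Type*} [Field K] (q : K) (n : ℕ) : K :=
  ∑ᶠ k : ℤ, q ^ (3 * k ^ 2 - k - 3 * k * n) * qbinom q n (3 * k - 1 - n)

noncomputable def g {K : Type*} [Field K] (q : K) (n : ℕ) : K := S1 q n - S3 q n

section Aux

variable {K : Type*} [Field K] {q : K}

lemma qbinom_of_neg (q : K) : ∀ (n : ℕ) (r : ℤ), r < 0 → qbinom q n r = 0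
  | 0, r, hr => by simp [qbinom, hr.ne]
  | n + 1, r, hr => by
    rw [qbinom, qbinom_of_neg q n r hr, qbinom_of_neg q n (r-1) (by omega)]
    ring

lemma qbinom_of_gt (q : K) : ∀ (n : ℕ) (r : ℤ), (n : ℤ) < r → qbinom q n r = 0
  | 0, r, hr => by
    simp only [Nat.cast_zero] at hr; simp [qbinom, hr.ne']
  | n + 1, r, hr => by
    rw [qbinom, qbinom_of_gt q n r (by push_cast at hr ⊢; omega),
      qbinom_of_gt q n (r-1) (by push_cast at hr ⊢; omega)]
    ring

lemma pascalA (q : K) (n : ℕ) (r : ℤ) :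
    qbinom q (n + 1) r = q ^ r * qbinom q n r + qbinom q n (r - 1) := by
  rcases le_or_gt 0 r with h | h
  · rw [qbinom]
    congr 2
    rw [← zpow_natCast]
    congr 1
    omega
  · rw [qbinom, qbinom_of_neg q n r h, qbinom_of_neg q n (r-1) (by omega)]
    ring

lemma pascalB (hq : q ≠ 0) : ∀ (n : ℕ) (r : ℤ),
    qbinom q (n + 1) r = qbinom q n r + q ^ ((n : ℤ) + 1 - r) * qbinom q n (r - 1)
  | 0, r => by
    rcases eq_or_ne r 0 with rfl | h0
    · simp [qbinom]
    rcases eq_or_ne r 1 with rfl | h1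
    · norm_num [qbinom]
    · rw [qbinom]
      have h0' : r - 1 ≠ 0 := by omega
      simp [qbinom, h0, h0', h1]
  | n + 1, r => by
    have hA1 := pascalA q (n+1) r
    have hA2 := pascalA q n r
    have hA3 := pascalA q n (r-1)
    have hB2 := pascalB hq n r
    have hB3 := pascalB hq n (r-1)
    have e1 : q ^ r = q ^ (r - 1) * q := by
      rw [← zpow_add_one₀ hq]; ring_nf
    have e2 : q ^ ((n : ℤ) + 1 + 1 - r) = q ^ ((n : ℤ) + 1 - r) * q := by
      rw [← zpow_add_one₀ hq]; ring_nf
    have e3 : ((n : ℤ) + 1 - (r - 1)) = ((n : ℤ) + 1 + 1 - r) := by ring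
    rw [e3, e2] at hB3
    rw [e1] at hA1 hA2
    push_cast
    rw [e2]
    linear_combination hA1 - hA2 + (q ^ (r-1) * q) * hB2 - (q ^ ((n:ℤ)+1-r) * q) * hA3 + hB3

lemma ratio (hq : q ≠ 0) (n : ℕ) (r : ℤ) :
    (1 - q ^ r) * qbinom q n r = (1 - q ^ ((n : ℤ) + 1 - r)) * qbinom q n (r - 1) := by
  have hA := pascalA q n r
  have hB := pascalB hq n r
  linear_combination hA - hB

lemma qbinom_symm (hq : q ≠ 0) : ∀ (n : ℕ) (r : ℤ), qbinom q n r = qbinom q n ((n : ℤ) - r)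
  | 0, r => by
    rcases eq_or_ne r 0 with rfl | h0
    · simp
    · have h0' : (0:ℤ) - r ≠ 0 := by omega
      simp only [Nat.cast_zero, qbinom, if_neg h0, if_neg h0']
  | n + 1, r => by
    have hIH1 := qbinom_symm hq n r
    have hIH2 := qbinom_symm hq n (r-1)
    have hA := pascalA q n r
    have hB := pascalB hq n ((n:ℤ)+1-r)
    have e0 : (↑(n+1) : ℤ) - r = (n:ℤ)+1-r := by push_cast; ring
    have e1 : (n:ℤ)+1-((n:ℤ)+1-r) = r := by ring
    have e2 : (n:ℤ)+1-r-1 = (n:ℤ)-r := by ring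
    have e3 : (n:ℤ)+1-r = (n:ℤ)-(r-1) := by ring
    rw [e0, hA, hB, e1, e2, ← hIH1]
    rw [e3, ← hIH2]
    ring

noncomputable def Hs (q : K) (a i : ℤ) (m : ℕ) : K :=
  ∑ᶠ k : ℤ, q ^ (3*k^2 + a*k - 3*k*m) * qbinom q m (3*k - i - m)

lemma Hsupp (c : ℤ → K) (i : ℤ) (m : ℕ) :
    (Function.support fun k : ℤ => c k * qbinom q m (3*k - i - m)).Finite := by
  apply Set.Finite.subset (Set.finite_Icc (-(i.natAbs + m) : ℤ) ((i.natAbs : ℤ) + m))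
  intro k hk
  simp only [Function.mem_support] at hk
  have h1 : ¬ (3*k - i - m < 0) := fun h => hk (by rw [qbinom_of_neg q m _ h, mul_zero])
  have h2 : ¬ ((m:ℤ) < 3*k - i - m) := fun h => hk (by rw [qbinom_of_gt q m _ h, mul_zero])
  simp only [Set.mem_Icc]
  omega

lemma Hstep (hq : q ≠ 0) (a i : ℤ) (m : ℕ) :
    Hs q a i (m+1) = q ^ (-i-(m:ℤ)-1) * Hs q a (i+1) m + Hs q (a-3) (i+2) m := by
  have key : ∀ k : ℤ, q ^ (3*k^2 + a*k - 3*k*(↑(m+1):ℤ)) * qbinom q (m+1) (3*k - i - (↑(m+1):ℤ))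
      = (q ^ (-i-(m:ℤ)-1) * q ^ (3*k^2 + a*k - 3*k*m)) * qbinom q m (3*k - (i+1) - m)
        + q ^ (3*k^2 + (a-3)*k - 3*k*m) * qbinom q m (3*k - (i+2) - m) := by
    intro k
    have e0 : (3*k - i - (↑(m+1):ℤ)) = 3*k - (i+1) - (m:ℤ) := by push_cast; ring
    have hA := pascalA q m (3*k - (i+1) - (m:ℤ))
    have e1 : (3*k - (i+1) - (m:ℤ)) - 1 = 3*k - (i+2) - (m:ℤ) := by ring
    rw [e0, hA, e1, mul_add, ← mul_assoc, ← zpow_add₀ hq, ← zpow_add₀ hq]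
    push_cast
    ring
  show (∑ᶠ k : ℤ, q ^ (3*k^2 + a*k - 3*k*(↑(m+1):ℤ)) * qbinom q (m+1) (3*k - i - (↑(m+1):ℤ))) = _
  rw [finsum_congr key, finsum_add_distrib (Hsupp _ _ _) (Hsupp _ _ _)]
  congr 1
  rw [finsum_congr (fun k : ℤ => mul_assoc (q ^ (-i-(m:ℤ)-1)) _ _),
    ← mul_finsum _ _]
  rfl

lemma Hshift (hq : q ≠ 0) (a i : ℤ) (m : ℕ) :
    Hs q a (i+3) m = q ^ (3+a-3*(m:ℤ)) * Hs q (a+6) i m := by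
  rw [Hs, ← finsum_comp_equiv (Equiv.addRight (1:ℤ))]
  simp only [Equiv.coe_addRight]
  have key : ∀ k : ℤ,
      q ^ (3*(k+1)^2 + a*(k+1) - 3*(k+1)*m) * qbinom q m (3*(k+1) - (i+3) - m)
      = (q ^ (3+a-3*(m:ℤ)) * q ^ (3*k^2 + (a+6)*k - 3*k*m)) * qbinom q m (3*k - i - m) := by
    intro k
    have e0 : 3*(k+1) - (i+3) - (m:ℤ) = 3*k - i - m := by ring
    rw [e0, ← zpow_add₀ hq]
    ring
  rw [finsum_congr key,
    finsum_congr (fun k : ℤ => mul_assoc (q ^ (3+a-3*(m:ℤ))) _ _),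
    ← mul_finsum _ _]
  rfl

lemma Hsym0 (hq : q ≠ 0) (a : ℤ) (m : ℕ) :
    Hs q a 0 m = q ^ (a*m) * Hs q (-a) 0 m := by
  rw [Hs, ← finsum_comp_equiv (Equiv.subLeft (m:ℤ))]
  simp only [Equiv.subLeft_apply]
  have key : ∀ k : ℤ,
      q ^ (3*((m:ℤ)-k)^2 + a*((m:ℤ)-k) - 3*((m:ℤ)-k)*m) * qbinom q m (3*((m:ℤ)-k) - 0 - m)
      = (q ^ (a*(m:ℤ)) * q ^ (3*k^2 + (-a)*k - 3*k*m)) * qbinom q m (3*k - 0 - m) := by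
    intro k
    have e0 : 3*((m:ℤ)-k) - 0 - (m:ℤ) = (m:ℤ) - (3*k - 0 - m) := by ring
    rw [e0, ← qbinom_symm hq m (3*k - 0 - m), ← zpow_add₀ hq]
    ring
  rw [finsum_congr key,
    finsum_congr (fun k : ℤ => mul_assoc (q ^ (a*(m:ℤ))) _ _),
    ← mul_finsum _ _]
  rfl

lemma Hsym12 (hq : q ≠ 0) (a : ℤ) (m : ℕ) :
    Hs q a 1 m = q ^ (((m:ℤ)+1)*(a+3)) * Hs q (-a-6) 2 m := by
  rw [Hs, ← finsum_comp_equiv (Equiv.subLeft ((m:ℤ)+1))]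
  simp only [Equiv.subLeft_apply]
  have key : ∀ k : ℤ,
      q ^ (3*((m:ℤ)+1-k)^2 + a*((m:ℤ)+1-k) - 3*((m:ℤ)+1-k)*m) * qbinom q m (3*((m:ℤ)+1-k) - 1 - m)
      = (q ^ (((m:ℤ)+1)*(a+3)) * q ^ (3*k^2 + (-a-6)*k - 3*k*m)) * qbinom q m (3*k - 2 - m) := by
    intro k
    have e0 : 3*((m:ℤ)+1-k) - 1 - (m:ℤ) = (m:ℤ) - (3*k - 2 - m) := by ring
    rw [e0, ← qbinom_symm hq m (3*k - 2 - m), ← zpow_add₀ hq]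
    ring
  rw [finsum_congr key,
    finsum_congr (fun k : ℤ => mul_assoc (q ^ (((m:ℤ)+1)*(a+3))) _ _),
    ← mul_finsum _ _]
  rfl

lemma zmerge (hq : q ≠ 0) (E r s : ℤ) (X Y : K)
    (h : (1 - q ^ r) * X = (1 - q ^ s) * Y) :
    q ^ E * X - q ^ (E + r) * X = q ^ E * Y - q ^ (E + s) * Y := by
  rw [zpow_add₀ hq, zpow_add₀ hq]
  linear_combination q ^ E * h

lemma HrelR (hq : q ≠ 0) (a i : ℤ) (m : ℕ) :
    Hs q a i m - q ^ (-i-(m:ℤ)) * Hs q (a+3) i m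
      = Hs q a (i+1) m - q ^ (2*(m:ℤ)+1+i) * Hs q (a-3) (i+1) m := by
  have key : ∀ k : ℤ,
      q ^ (3*k^2 + a*k - 3*k*m) * qbinom q m (3*k - i - m)
        - (q ^ (-i-(m:ℤ)) * q ^ (3*k^2 + (a+3)*k - 3*k*m)) * qbinom q m (3*k - i - m)
      = q ^ (3*k^2 + a*k - 3*k*m) * qbinom q m (3*k - (i+1) - m)
        - (q ^ (2*(m:ℤ)+1+i) * q ^ (3*k^2 + (a-3)*k - 3*k*m)) * qbinom q m (3*k - (i+1) - m) := by
    intro k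
    have h := ratio hq m (3*k - i - m)
    have e1 : 3*k - i - (m:ℤ) - 1 = 3*k - (i+1) - m := by ring
    rw [e1] at h
    have h3 := zmerge hq (3*k^2 + a*k - 3*k*m) (3*k - i - m) ((m:ℤ) + 1 - (3*k - i - m))
      (qbinom q m (3*k - i - m)) (qbinom q m (3*k - (i+1) - m)) h
    rw [← zpow_add₀ hq, ← zpow_add₀ hq,
      show -i-(m:ℤ)+(3*k^2+(a+3)*k-3*k*(m:ℤ)) = 3*k^2+a*k-3*k*(m:ℤ)+(3*k-i-(m:ℤ)) from by ring,
      show 2*(m:ℤ)+1+i+(3*k^2+(a-3)*k-3*k*(m:ℤ)) = 3*k^2+a*k-3*k*(m:ℤ)+((m:ℤ)+1-(3*k-i-(m:ℤ))) from by ring]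
    exact h3
  have hfin : ∀ (a' i' : ℤ), (Function.support fun k : ℤ =>
      q ^ (3*k^2 + a'*k - 3*k*(m:ℤ)) * qbinom q m (3*k - i' - m)).Finite :=
    fun a' i' => Hsupp _ i' m
  have hfin2 : ∀ (c : K) (a' i' : ℤ), (Function.support fun k : ℤ =>
      (c * q ^ (3*k^2 + a'*k - 3*k*(m:ℤ))) * qbinom q m (3*k - i' - m)).Finite :=
    fun c a' i' => Hsupp _ i' m
  calc Hs q a i m - q ^ (-i-(m:ℤ)) * Hs q (a+3) i m
      = ∑ᶠ k : ℤ, (q ^ (3*k^2 + a*k - 3*k*m) * qbinom q m (3*k - i - m)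
        - (q ^ (-i-(m:ℤ)) * q ^ (3*k^2 + (a+3)*k - 3*k*m)) * qbinom q m (3*k - i - m)) := by
        rw [finsum_sub_distrib (hfin a i) (hfin2 _ (a+3) i)]
        congr 1
        rw [Hs, mul_finsum _ _]
        exact finsum_congr fun k => (mul_assoc _ _ _).symm
    _ = ∑ᶠ k : ℤ, (q ^ (3*k^2 + a*k - 3*k*m) * qbinom q m (3*k - (i+1) - m)
        - (q ^ (2*(m:ℤ)+1+i) * q ^ (3*k^2 + (a-3)*k - 3*k*m)) * qbinom q m (3*k - (i+1) - m)) :=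
        finsum_congr key
    _ = Hs q a (i+1) m - q ^ (2*(m:ℤ)+1+i) * Hs q (a-3) (i+1) m := by
        rw [finsum_sub_distrib (hfin a (i+1)) (hfin2 _ (a-3) (i+1))]
        congr 1
        rw [Hs, mul_finsum _ _]
        exact finsum_congr fun k => mul_assoc _ _ _

lemma qflip (hq : q ≠ 0) (c d : ℤ) (h : d + c = 0) (X Y : K) (hXY : X = q ^ c * Y) :
    Y = q ^ d * X := by
  rw [hXY, ← mul_assoc, ← zpow_add₀ hq, h, zpow_zero, one_mul]

lemma S1_eq (n : ℕ) : S1 q n = Hs q (-1) 0 n := by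
  rw [S1, Hs]
  exact finsum_congr fun k => by
    rw [show 3*k^2 + (-1)*k - 3*k*(n:ℤ) = 3*k^2 - k - 3*k*(n:ℤ) from by ring,
      show 3*k - (0:ℤ) - (n:ℤ) = 3*k - (n:ℤ) from by ring]

lemma S3_eq (n : ℕ) : S3 q n = Hs q (-1) 1 n := by
  rw [S3, Hs]
  exact finsum_congr fun k => by
    rw [show 3*k^2 + (-1)*k - 3*k*(n:ℤ) = 3*k^2 - k - 3*k*(n:ℤ) from by ring]

end Aux

theorem stmt_4 {K : Type*} [Field K] (q : K) (hq : q ≠ 0) :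
    g q 0 = 1 ∧ ∀ n : ℕ, 1 ≤ n → g q n = -q ^ (-(n : ℤ)) * g q (n - 1) := by
  constructor
  · have hS1 : S1 q 0 = 1 := by
      rw [S1, finsum_eq_single _ (0:ℤ)]
      · norm_num [qbinom]
      · intro x hx
        have hne : 3*x - ((0:ℕ):ℤ) ≠ 0 := by push_cast; omega
        rw [show qbinom q 0 (3*x - ((0:ℕ):ℤ)) = 0 from by simp only [qbinom]; rw [if_neg hne], mul_zero]
    have hS3 : S3 q 0 = 0 := by
      rw [S3]
      have h0 : ∀ k : ℤ, q ^ (3*k^2 - k - 3*k*((0:ℕ):ℤ)) * qbinom q 0 (3*k - 1 - ((0:ℕ):ℤ)) = 0 := by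
        intro k
        have hne : 3*k - 1 - ((0:ℕ):ℤ) ≠ 0 := by push_cast; omega
        rw [show qbinom q 0 (3*k - 1 - ((0:ℕ):ℤ)) = 0 from by simp only [qbinom]; rw [if_neg hne], mul_zero]
      rw [finsum_congr h0, finsum_zero]
    rw [g, hS1, hS3]
    norm_num
  · intro n hn
    obtain ⟨m, rfl⟩ : ∃ m, n = m + 1 := ⟨n - 1, by omega⟩
    have hms : m + 1 - 1 = m := rfl
    rw [hms, g, g, S1_eq, S3_eq, S1_eq, S3_eq]
    have A := Hstep hq (-1) 0 m
    rw [show ((0:ℤ)+1) = 1 from by norm_num, show ((0:ℤ)+2) = 2 from by norm_num,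
      show ((-1:ℤ)-3) = -4 from by norm_num,
      show (-0-(m:ℤ)-1) = -(m:ℤ)-1 from by ring] at A
    have B := Hstep hq (-1) 1 m
    rw [show ((1:ℤ)+1) = 2 from by norm_num, show ((1:ℤ)+2) = 3 from by norm_num,
      show ((-1:ℤ)-3) = -4 from by norm_num,
      show (-1-(m:ℤ)-1) = -(m:ℤ)-2 from by ring] at B
    have C := Hshift hq (-4) 0 m
    rw [show ((0:ℤ)+3) = 3 from by norm_num, show ((-4:ℤ)+6) = 2 from by norm_num,
      show (3+(-4:ℤ)-3*(m:ℤ)) = -1-3*(m:ℤ) from by ring] at C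
    have D := Hsym12 hq (-2) m
    rw [show (-(-2:ℤ)-6) = -4 from by norm_num] at D
    have E := Hsym12 hq (-5) m
    rw [show (-(-5:ℤ)-6) = -1 from by norm_num] at E
    have F := Hsym0 hq 2 m
    have G := Hsym0 hq 1 m
    rw [show (1*(m:ℤ)) = (m:ℤ) from by ring] at G
    have R := HrelR hq (-2) 0 m
    rw [show ((0:ℤ)+1) = 1 from by norm_num, show ((-2:ℤ)+3) = 1 from by norm_num,
      show ((-2:ℤ)-3) = -5 from by norm_num,
      show (-0-(m:ℤ)) = -(m:ℤ) from by ring,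
      show (2*(m:ℤ)+1+0) = 2*(m:ℤ)+1 from by ring] at R
    have D' := qflip hq (((m:ℤ)+1)*(-2+3)) (-(m:ℤ)-1) (by ring) _ _ D
    have E1 := qflip hq (((m:ℤ)+1)*(-5+3)) (2*(m:ℤ)+2) (by ring) _ _ E
    have M1 : q ^ (-(m:ℤ)-1) * q ^ (2*(m:ℤ)+1) = q ^ ((m:ℤ)) := by
      rw [← zpow_add₀ hq, show (-(m:ℤ)-1) + (2*(m:ℤ)+1) = (m:ℤ) from by ring]
    have M2 : q ^ (-(m:ℤ)-2) * q ^ (2*(m:ℤ)+2) = q ^ ((m:ℤ)) := by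
      rw [← zpow_add₀ hq, show (-(m:ℤ)-2) + (2*(m:ℤ)+2) = (m:ℤ) from by ring]
    have M3 : q ^ (-1-3*(m:ℤ)) * q ^ (2*(m:ℤ)) = q ^ (-(m:ℤ)-1) := by
      rw [← zpow_add₀ hq, show (-1-3*(m:ℤ)) + 2*(m:ℤ) = -(m:ℤ)-1 from by ring]
    have M4 : q ^ (-(m:ℤ)) * q ^ ((m:ℤ)) = 1 := by
      rw [← zpow_add₀ hq, show -(m:ℤ) + (m:ℤ) = 0 from by ring, zpow_zero]
    push_cast
    rw [show (-((m:ℤ)+1)) = -(m:ℤ)-1 from by ring]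
    linear_combination A - B + D' - q ^ (-(m:ℤ)-1) * R
      - (q ^ (-(m:ℤ)-1) * q ^ (-(m:ℤ))) * G
      - (q ^ (-(m:ℤ)-1) * Hs q (-1) 0 m) * M4
      + Hs q (-5) 1 m * M1
      - C - q ^ (-(m:ℤ)-2) * E1
      - Hs q (-5) 1 m * M2
      - q ^ (-1-3*(m:ℤ)) * F
      - Hs q (-2) 0 m * M3
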